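/- Let π be a permutation of {1,...,n} and let e₁ < e₂ < ... < e_k be a chain of matches (each e_i = (x_i, y_i) with x_i < y_i, π⁻¹(x_i) > π⁻¹(y_i), and e_i < e_{i+1} means y_i < x_{i+1} and π⁻¹(x_i) < π⁻¹(y_{i+1})). Then the set of edges {x_i y_i : 1 ≤ i ≤ k} is an induced matching in G(π). -/

import Mathlib

def permGraph {n : ℕ} (π : Equiv.Perm (Fin n)) : SimpleGraph (Fin n) where
  Adj u v := (u < v ∧ π.symm v < π.symm u) ∨ (v < u ∧ π.symm u < π.symm v)
  symm := by constructor; intro u v h; tauto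
  loopless := by constructor; intro u h; rcases h with ⟨h, _⟩ | ⟨h, _⟩ <;> exact lt_irrefl u h

def IsMatch {n : ℕ} (π : Equiv.Perm (Fin n)) (x y : Fin n) : Prop :=
  x < y ∧ π.symm y < π.symm x

def MatchLT {n : ℕ} (π : Equiv.Perm (Fin n)) (e e' : Fin n × Fin n) : Prop :=
  e.2 < e'.1 ∧ π.symm e.1 < π.symm e'.2

/-- `M` is an induced matching of `G`: a set of edges of `G` such that any two distinct
edges of `M` share no endpoint and no edge of `G` joins an endpoint of one to an endpoint
of the other. -/
def IsInducedMatching {V : Type*} (G : SimpleGraph V) (M : Set (Sym2 V)) : Prop :=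
  M ⊆ G.edgeSet ∧
    ∀ e ∈ M, ∀ f ∈ M, e ≠ f → ∀ u ∈ e, ∀ v ∈ f, u ≠ v ∧ ¬ G.Adj u v

/-- The edges of a chain of matches `e₁ < e₂ < ⋯ < e_k` form an induced matching in `G(π)`. -/
theorem stmt_4 {n : ℕ} (π : Equiv.Perm (Fin n)) (k : ℕ) (e : ℕ → Fin n × Fin n)
    (hm : ∀ i < k, IsMatch π (e i).1 (e i).2)
    (hc : ∀ i, i + 1 < k → MatchLT π (e i) (e (i + 1))) :
    IsInducedMatching (permGraph π) {s | ∃ i < k, s = s((e i).1, (e i).2)} := by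
  -- key monotonicity: for i < j < k, y_i < x_j and σ x_i < σ y_j
  have key : ∀ j, j < k → ∀ i, i < j →
      (e i).2 < (e j).1 ∧ π.symm (e i).1 < π.symm (e j).2 := by
    intro j
    induction j with
    | zero => intro _ i hi; omega
    | succ m ih =>
      intro hj i hi
      rcases Nat.lt_succ_iff_lt_or_eq.mp hi with hi' | rfl
      · obtain ⟨h1, h2⟩ := ih (by omega) i hi'
        obtain ⟨hm1, hm2⟩ := hm m (by omega)
        obtain ⟨hc1, hc2⟩ := hc m hj
        exact ⟨h1.trans (hm1.trans hc1), h2.trans (hm2.trans hc2)⟩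
      · exact hc i hj
  -- general fact: all four points separated for i < j
  have sep : ∀ i j, i < j → j < k → ∀ u v : Fin n,
      (u = (e i).1 ∨ u = (e i).2) → (v = (e j).1 ∨ v = (e j).2) →
      u < v ∧ π.symm u < π.symm v := by
    intro i j hij hjk u v hu hv
    obtain ⟨h1, h2⟩ := key j hjk i hij
    obtain ⟨hi1, hi2⟩ := hm i (hij.trans hjk)
    obtain ⟨hj1, hj2⟩ := hm j hjk
    rcases hu with rfl | rfl <;> rcases hv with rfl | rfl
    · exact ⟨hi1.trans h1, h2.trans hj2⟩
    · exact ⟨hi1.trans (h1.trans hj1), h2⟩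
    · exact ⟨h1, hi2.trans (h2.trans hj2)⟩
    · exact ⟨h1.trans hj1, hi2.trans h2⟩
  constructor
  · rintro s ⟨i, hik, rfl⟩
    obtain ⟨h1, h2⟩ := hm i hik
    exact Or.inl ⟨h1, h2⟩
  · rintro s ⟨i, hik, rfl⟩ t ⟨j, hjk, rfl⟩ hne u hu v hv
    rw [Sym2.mem_iff] at hu hv
    have hij : i ≠ j := by rintro rfl; exact hne rfl
    have main : ∀ a b : Fin n, a < b → π.symm a < π.symm b →
        a ≠ b ∧ ¬ (permGraph π).Adj a b := by
      intro a b hab hsab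
      refine ⟨hab.ne, ?_⟩
      rintro (⟨_, h⟩ | ⟨h, _⟩)
      · exact absurd hsab (not_lt.mpr h.le)
      · exact absurd hab (not_lt.mpr h.le)
    rcases hij.lt_or_gt with h | h
    · obtain ⟨hlt, hslt⟩ := sep i j h hjk u v hu hv
      exact main u v hlt hslt
    · obtain ⟨hlt, hslt⟩ := sep j i h hik v u hv hu
      have := main v u hlt hslt
      exact ⟨this.1.symm, fun hadj => this.2 hadj.symm⟩
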